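/- Let r : ℝ^n → ℝ be strictly convex and differentiable, and set 𝓟 = { −∇r(a) : a ∈ ℝ^n }. Then: (i) for every p ∈ 𝓟 the function a ↦ r(a) + a·p attains its minimum over ℝ^n at a unique point Z(p); and (ii) the resulting demand function Z : 𝓟 → ℝ^n is continuous on 𝓟. -/

import Mathlib

open Filter Topology
open scoped RealInnerProductSpace

section Aux

variable {n : ℕ}
local notation "E" => EuclideanSpace ℝ (Fin n)

/-- Gradient inequality for convex differentiable functions. -/
private lemma grad_ineq (r : E → ℝ) (hconv : ConvexOn ℝ Set.univ r)
    (hdiff : Differentiable ℝ r) (a x : E) :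
    r a + ⟪gradient r a, x - a⟫ ≤ r x := by
  have hline : HasDerivAt (fun t : ℝ => a + t • (x - a)) (x - a) 0 := by
    simpa using ((hasDerivAt_id (0:ℝ)).smul_const (x - a)).const_add a
  have hg : HasDerivAt (fun t : ℝ => r (a + t • (x - a))) (fderiv ℝ r a (x - a)) 0 := by
    have h0 : HasFDerivAt r (fderiv ℝ r a) (a + (0:ℝ) • (x - a)) := by
      simpa using (hdiff a).hasFDerivAt
    have := h0.comp_hasDerivAt 0 hline
    exact this
  have hgc : ConvexOn ℝ Set.univ (fun t : ℝ => r (a + t • (x - a))) := by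
    have := hconv.comp_affineMap (AffineMap.lineMap a x)
    have h2 : (AffineMap.lineMap a x : ℝ →ᵃ[ℝ] E) ⁻¹' Set.univ = Set.univ := by simp
    rw [h2] at this
    have e : (r ∘ (AffineMap.lineMap a x : ℝ →ᵃ[ℝ] E)) = fun t : ℝ => r (a + t • (x - a)) := by
      ext t
      simp [Function.comp, AffineMap.lineMap_apply, add_comm]
    rw [e] at this
    exact this
  have hslope := hgc.le_slope_of_hasDerivAt (Set.mem_univ 0) (Set.mem_univ 1) one_pos hg
  have hfd : fderiv ℝ r a (x - a) = ⟪gradient r a, x - a⟫ := by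
    have h := (hdiff a).hasGradientAt
    rw [hasGradientAt_iff_hasFDerivAt] at h
    rw [h.fderiv]
    simp [InnerProductSpace.toDual_apply_apply]
  have : fderiv ℝ r a (x - a) ≤ r x - r a := by simpa [slope] using hslope
  linarith [hfd ▸ this]

private lemma inner_convexOn (p : E) : ConvexOn ℝ Set.univ (fun x : E => ⟪x, p⟫) := by
  refine ⟨convex_univ, fun x _ y _ a b _ _ _ => le_of_eq ?_⟩
  show ⟪a • x + b • y, p⟫ = a • ⟪x, p⟫ + b • ⟪y, p⟫
  rw [inner_add_left, real_inner_smul_left, real_inner_smul_left]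
  rfl

private lemma fp_strictConvex (r : E → ℝ) (hconv : StrictConvexOn ℝ Set.univ r) (p : E) :
    StrictConvexOn ℝ Set.univ (fun x : E => r x + ⟪x, p⟫) :=
  hconv.add_convexOn (inner_convexOn p)

/-- The point `a` minimizes `x ↦ r x + ⟪x, -∇r a⟫`. -/
private lemma min_at (r : E → ℝ) (hconv : StrictConvexOn ℝ Set.univ r)
    (hdiff : Differentiable ℝ r) (a x : E) :
    r a + ⟪a, -gradient r a⟫ ≤ r x + ⟪x, -gradient r a⟫ := by
  have h := grad_ineq r hconv.convexOn hdiff a x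
  have h2 : ⟪gradient r a, x - a⟫ = ⟪x, gradient r a⟫ - ⟪a, gradient r a⟫ := by
    rw [real_inner_comm]
    simp [inner_sub_left]
  simp only [inner_neg_right]
  linarith [h2 ▸ h]

/-- Strict minimality: any other point gives a strictly larger value. -/
private lemma strict_min (f : E → ℝ) (hf : StrictConvexOn ℝ Set.univ f) (a : E)
    (hmin : ∀ x, f a ≤ f x) (x : E) (hx : x ≠ a) : f a < f x := by
  have hmid := hf.2 (Set.mem_univ x) (Set.mem_univ a) hx
    (by norm_num : (0:ℝ) < 1/2) (by norm_num : (0:ℝ) < 1/2) (by norm_num)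
  have h1 := hmin ((1/2 : ℝ) • x + (1/2 : ℝ) • a)
  rw [smul_eq_mul, smul_eq_mul] at hmid
  linarith

/-- Uniqueness of minimizers for strictly convex functions. -/
private lemma min_unique (f : E → ℝ) (hf : StrictConvexOn ℝ Set.univ f) (z w : E)
    (hz : ∀ x, f z ≤ f x) (hw : ∀ x, f w ≤ f x) : z = w := by
  by_contra hne
  exact absurd (strict_min f hf w hw z hne) (not_lt.2 (hz w))

end Aux

/-- For a strictly convex differentiable `r : ℝⁿ → ℝ` and
`𝓟 = {−∇r(a) : a ∈ ℝⁿ}`: (i) for every `p ∈ 𝓟` the map `a ↦ r(a) + a·p` has a unique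
minimizer `Z(p)`, and (ii) the demand function `Z` is continuous on `𝓟`. -/
theorem stmt4 {n : ℕ} (r : EuclideanSpace ℝ (Fin n) → ℝ)
    (hconv : StrictConvexOn ℝ Set.univ r)
    (hdiff : Differentiable ℝ r) :
    ∃ Z : EuclideanSpace ℝ (Fin n) → EuclideanSpace ℝ (Fin n),
      (∀ p ∈ {p : EuclideanSpace ℝ (Fin n) | ∃ a, p = -gradient r a},
        (∀ a, r (Z p) + ⟪Z p, p⟫ ≤ r a + ⟪a, p⟫) ∧
        (∀ z, (∀ a, r z + ⟪z, p⟫ ≤ r a + ⟪a, p⟫) → z = Z p)) ∧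
      ContinuousOn Z {p : EuclideanSpace ℝ (Fin n) | ∃ a, p = -gradient r a} := by
  classical
  set S : Set (EuclideanSpace ℝ (Fin n)) := {p | ∃ a, p = -gradient r a} with hS
  set Z : EuclideanSpace ℝ (Fin n) → EuclideanSpace ℝ (Fin n) :=
    fun p => if h : ∃ a, p = -gradient r a then h.choose else 0 with hZ
  -- For p ∈ S, Z p is a global minimizer of x ↦ r x + ⟪x, p⟫
  have hZmin : ∀ p ∈ S, ∀ x, r (Z p) + ⟪Z p, p⟫ ≤ r x + ⟪x, p⟫ := by
    intro p hp x
    have hp' : ∃ a, p = -gradient r a := hp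
    obtain ⟨c, hc1, hc2⟩ : ∃ c, Z p = c ∧ p = -gradient r c :=
      ⟨hp'.choose, dif_pos hp', hp'.choose_spec⟩
    rw [hc1, hc2]
    exact min_at r hconv hdiff c x
  have hZuniq : ∀ p ∈ S, ∀ z, (∀ x, r z + ⟪z, p⟫ ≤ r x + ⟪x, p⟫) → z = Z p := by
    intro p hp z hz
    exact min_unique _ (fp_strictConvex r hconv p) z (Z p) hz (hZmin p hp)
  refine ⟨Z, fun p hp => ⟨hZmin p hp, hZuniq p hp⟩, ?_⟩
  -- Continuity
  rw [Metric.continuousOn_iff]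
  intro p hp ε hε
  set f : EuclideanSpace ℝ (Fin n) → ℝ := fun x => r x + ⟪x, p⟫ with hf
  have hfc : Continuous f := by
    exact (hdiff.continuous).add (continuous_id.inner continuous_const)
  set a : EuclideanSpace ℝ (Fin n) := Z p with ha
  have hamin : ∀ x, f a ≤ f x := hZmin p hp
  have key : ∀ δ : ℝ, 0 < δ →
      (∀ x ∈ Metric.sphere a ε, f a + δ ≤ f x) →
      ∀ q ∈ S, dist q p < δ / ε → dist (Z q) (Z p) < ε := by
    intro δ hδ hsph q hq hqp
    by_contra hge
    push_neg at hge
    set a' : EuclideanSpace ℝ (Fin n) := Z q with ha'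
    have hd : ε ≤ ‖a' - a‖ := by
      rwa [dist_eq_norm] at hge
    have hdpos : 0 < ‖a' - a‖ := lt_of_lt_of_le hε hd
    set t : ℝ := ε / ‖a' - a‖ with ht
    have htpos : 0 < t := div_pos hε hdpos
    have htle : t ≤ 1 := (div_le_one hdpos).2 hd
    set x : EuclideanSpace ℝ (Fin n) := a + t • (a' - a) with hx
    have hxs : x ∈ Metric.sphere a ε := by
      simp only [Metric.mem_sphere, dist_eq_norm, hx, add_sub_cancel_left]
      rw [norm_smul, Real.norm_eq_abs, abs_of_pos htpos, ht,
        div_mul_cancel₀ _ (ne_of_gt hdpos)]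
    -- (1) f a' ≤ f a + ‖a - a'‖ * ‖q - p‖
    have h1 : f a' ≤ f a + ‖a - a'‖ * ‖q - p‖ := by
      have hq1 : r a' + ⟪a', q⟫ ≤ r a + ⟪a, q⟫ := hZmin q hq a
      have hinner : ⟪a - a', q - p⟫ ≤ ‖a - a'‖ * ‖q - p‖ := real_inner_le_norm _ _
      have hexp : ⟪a - a', q - p⟫ = ⟪a, q⟫ - ⟪a, p⟫ - ⟪a', q⟫ + ⟪a', p⟫ := by
        simp [inner_sub_left, inner_sub_right]; ring
      simp only [hf]
      linarith [hexp ▸ hinner]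
    -- (2) convexity along the segment
    have h2 : f x ≤ (1 - t) * f a + t * f a' := by
      have hcvx := (fp_strictConvex r hconv p).convexOn.2 (Set.mem_univ a) (Set.mem_univ a')
        (by linarith : (0:ℝ) ≤ 1 - t) (le_of_lt htpos) (by ring)
      have hxeq : (1 - t) • a + t • a' = x := by
        simp only [hx]; module
      simpa [hf, hxeq] using hcvx
    -- (3) the sphere bound
    have h3 : f a + δ ≤ f x := hsph x hxs
    have h4 : t * (f a' - f a) ≤ t * (‖a - a'‖ * ‖q - p‖) := by
      apply mul_le_mul_of_nonneg_left _ (le_of_lt htpos)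
      linarith
    have h5 : t * ‖a - a'‖ = ε := by
      rw [ht, norm_sub_rev a a', div_mul_cancel₀ _ (ne_of_gt hdpos)]
    rw [← mul_assoc, h5] at h4
    have h6 : ‖q - p‖ < δ / ε := by rwa [dist_eq_norm] at hqp
    have h7 : ε * ‖q - p‖ < δ := by
      calc ε * ‖q - p‖ < ε * (δ / ε) := by
            apply mul_lt_mul_of_pos_left h6 hε
        _ = δ := by field_simp
    have h8 : δ ≤ t * (f a' - f a) := by nlinarith [h2, h3]
    linarith [h4, h7, h8]
  -- Now produce δ using compactness of the sphere
  by_cases hne : (Metric.sphere a ε).Nonempty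
  · have hcomp : IsCompact (Metric.sphere a ε) := isCompact_sphere a ε
    obtain ⟨x₀, hx₀s, hx₀min⟩ := hcomp.exists_isMinOn hne (hfc.continuousOn)
    have hx₀ne : x₀ ≠ a := by
      intro h
      rw [h] at hx₀s
      simp only [Metric.mem_sphere, dist_self] at hx₀s
      linarith
    have hδ0 : 0 < f x₀ - f a :=
      sub_pos.2 (strict_min f (fp_strictConvex r hconv p) a hamin x₀ hx₀ne)
    refine ⟨(f x₀ - f a) / ε, div_pos hδ0 hε, ?_⟩
    intro q hq hqp
    refine key (f x₀ - f a) hδ0 ?_ q hq hqp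
    intro x hxs
    have := hx₀min hxs
    simp only [Set.mem_setOf_eq] at this
    linarith [this]
  · -- sphere empty: then all points are within ε of a automatically
    refine ⟨1, one_pos, ?_⟩
    intro q hq hqp
    by_contra hge
    push_neg at hge
    have hd : ε ≤ ‖Z q - a‖ := by rwa [dist_eq_norm] at hge
    have hdpos : 0 < ‖Z q - a‖ := lt_of_lt_of_le hε hd
    have : a + (ε / ‖Z q - a‖) • (Z q - a) ∈ Metric.sphere a ε := by
      simp only [Metric.mem_sphere, dist_eq_norm, add_sub_cancel_left]
      rw [norm_smul, Real.norm_eq_abs, abs_of_pos (div_pos hε hdpos),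
        div_mul_cancel₀ _ (ne_of_gt hdpos)]
    exact hne ⟨_, this⟩
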